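/- Let N ≥ 2, n ≥ 2, and let χ⁽¹⁾,…,χ⁽ⁿ⁾ be the vanishing-order sequences of n nonzero partitions of N. If there exist k, k' with 2 ≤ k < k' ≤ N such that ∑_{i=1}^{n} χ⁽ⁱ⁾_k > (n−1)k and ∑_{i=1}^{n} χ⁽ⁱ⁾_{k'} ≤ (n−1)k', then n = 2. -/
import Mathlib


/-- `p` (with parts indexed from 1) is a partition of `N`: the parts are
nonincreasing, sum to `N`, and vanish beyond index `N`. -/
def IsPartitionOf (N : ℕ) (p : ℕ → ℕ) : Prop :=
  (∀ i, 1 ≤ i → p (i + 1) ≤ p i) ∧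
  (∑ j ∈ Finset.Icc 1 N, p j = N) ∧
  (∀ i, N < i → p i = 0)

/-- The vanishing order at `k` of the partition `p`: the least positive
integer `i` such that `p 1 + ⋯ + p i ≥ k`. -/
noncomputable def chiOf (p : ℕ → ℕ) (k : ℕ) : ℕ :=
  sInf {i | 1 ≤ i ∧ k ≤ ∑ j ∈ Finset.Icc 1 i, p j}

/-- `χ` is the vanishing-order sequence, on `{1,…,N}`, of the partition `p` of `N`. -/
def IsVanishingOrderSeq (N : ℕ) (p : ℕ → ℕ) (χ : ℕ → ℕ) : Prop :=
  IsPartitionOf N p ∧ ∀ k, 1 ≤ k → k ≤ N → χ k = chiOf p k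

section lemmas
variable {N : ℕ} {p : ℕ → ℕ}

lemma part_anti (hp : IsPartitionOf N p) {j i : ℕ} (hj : 1 ≤ j) (hji : j ≤ i) :
    p i ≤ p j := by
  induction i with
  | zero => omega
  | succ i ih =>
    rcases Nat.lt_or_ge j (i+1) with hc | hc
    · exact le_trans (hp.1 i (by omega)) (ih (by omega))
    · have : j = i + 1 := by omega
      subst this; exact le_rfl

lemma chi_nonempty (hp : IsPartitionOf N p) {k : ℕ} (hk : 1 ≤ k) (hkN : k ≤ N) :
    {i | 1 ≤ i ∧ k ≤ ∑ j ∈ Finset.Icc 1 i, p j}.Nonempty :=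
  ⟨N, by constructor; omega; rw [hp.2.1]; exact hkN⟩

lemma chi_mem (hp : IsPartitionOf N p) {k : ℕ} (hk : 1 ≤ k) (hkN : k ≤ N) :
    1 ≤ chiOf p k ∧ k ≤ ∑ j ∈ Finset.Icc 1 (chiOf p k), p j :=
  Nat.sInf_mem (chi_nonempty hp hk hkN)

lemma chi_le {k i : ℕ} (hi : 1 ≤ i) (hS : k ≤ ∑ j ∈ Finset.Icc 1 i, p j) :
    chiOf p k ≤ i := Nat.sInf_le ⟨hi, hS⟩

lemma chi_min (hp : IsPartitionOf N p) {k i : ℕ} (hi : 1 ≤ i) (hik : i < chiOf p k) :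
    (∑ j ∈ Finset.Icc 1 i, p j) < k := by
  by_contra hcon
  have := chi_le (p := p) hi (Nat.le_of_not_lt hcon)
  omega

lemma chi_mono (hp : IsPartitionOf N p) {k k' : ℕ} (hk : 1 ≤ k) (hkk' : k ≤ k')
    (hk'N : k' ≤ N) : chiOf p k ≤ chiOf p k' := by
  obtain ⟨h1, h2⟩ := chi_mem hp (by omega) hk'N (k := k')
  exact chi_le h1 (by omega)

/-- χ_k ≤ k - 1 for 2 ≤ k ≤ N, given p 1 ≥ 2. -/
lemma chi_le_pred (hp : IsPartitionOf N p) (h2 : 2 ≤ p 1) {k : ℕ}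
    (hk : 2 ≤ k) (hkN : k ≤ N) : chiOf p k ≤ k - 1 := by
  apply chi_le (by omega)
  by_cases hall : ∀ j ∈ Finset.Icc 1 (k-1), 1 ≤ p j
  · have h1 : Finset.Icc 1 (k-1) = insert 1 (Finset.Icc 2 (k-1)) := by
      ext x
      simp only [Finset.mem_Icc, Finset.mem_insert]
      omega
    have h2' : (1 : ℕ) ∉ Finset.Icc 2 (k-1) := by simp
    rw [h1, Finset.sum_insert h2']
    have h3 : (Finset.Icc 2 (k-1)).card • 1 ≤ ∑ j ∈ Finset.Icc 2 (k-1), p j := by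
      apply Finset.card_nsmul_le_sum
      intro x hx
      exact hall x (by simp only [Finset.mem_Icc] at hx ⊢; omega)
    rw [smul_eq_mul, Nat.card_Icc] at h3
    omega
  · push_neg at hall
    obtain ⟨j, hjmem, hjz⟩ := hall
    simp only [Finset.mem_Icc] at hjmem
    have hz : p j = 0 := by omega
    have : ∑ j ∈ Finset.Icc 1 (k-1), p j = ∑ j ∈ Finset.Icc 1 N, p j := by
      apply Finset.sum_subset
      · exact Finset.Icc_subset_Icc le_rfl (by omega)
      · intro x hx hx2
        simp only [Finset.mem_Icc] at hx hx2
        have : j ≤ x := by omega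
        have := part_anti hp (j := j) (i := x) (by omega) this
        omega
    rw [this, hp.2.1]; exact hkN

/-- if χ stalls from k to k+1, then 2 χ_k ≤ k + 1. -/
lemma chi_stall (hp : IsPartitionOf N p) {k : ℕ} (hk : 2 ≤ k) (hkN : k + 1 ≤ N)
    (hst : chiOf p (k+1) = chiOf p k) : 2 * chiOf p k ≤ k + 1 := by
  set c := chiOf p k with hc
  obtain ⟨hc1, hcS⟩ := chi_mem hp (k := k+1) (by omega) hkN
  rw [hst] at hcS
  rcases Nat.lt_or_ge c 2 with h1 | h1
  · omega
  · -- c ≥ 2 : S (c-1) < k, and p c ≥ 2 hence all parts up to c-1 are ≥ 2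
    have hSc1 : (∑ j ∈ Finset.Icc 1 (c-1), p j) < k := chi_min hp (by omega) (by omega)
    have hsplit : ∑ j ∈ Finset.Icc 1 c, p j = (∑ j ∈ Finset.Icc 1 (c-1), p j) + p c := by
      have h := Finset.sum_Icc_succ_top (a := 1) (b := c - 1) (by omega) p
      have hceq : c - 1 + 1 = c := by omega
      rw [hceq] at h
      exact h
    have hpc : 2 ≤ p c := by omega
    have hall : ∀ j ∈ Finset.Icc 1 (c-1), 2 ≤ p j := by
      intro j hj
      simp only [Finset.mem_Icc] at hj
      exact le_trans hpc (part_anti hp (by omega) (by omega))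
    have : 2 * (c - 1) ≤ ∑ j ∈ Finset.Icc 1 (c-1), p j := by
      calc 2 * (c-1) = ∑ _j ∈ Finset.Icc 1 (c-1), 2 := by
            rw [Finset.sum_const, smul_eq_mul, Nat.card_Icc]; ring_nf; omega
        _ ≤ _ := Finset.sum_le_sum hall
    omega

end lemmas

lemma arith_contra {n m A B R : ℕ} (hn : 3 ≤ n) (hm : 2 ≤ m) (h1 : 2*A ≤ m+1)
    (h2 : 2*B ≤ m+1) (h3 : R ≤ (n-2)*(m-1)) (h4 : (n-1)*m + 1 ≤ A + (B + R)) : False := by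
  obtain ⟨a, rfl⟩ : ∃ a, n = a + 3 := ⟨n-3, by omega⟩
  obtain ⟨b, rfl⟩ : ∃ b, m = b + 2 := ⟨m-2, by omega⟩
  have e1 : a + 3 - 2 = a + 1 := by omega
  have e2 : b + 2 - 1 = b + 1 := by omega
  have e3 : a + 3 - 1 = a + 2 := by omega
  rw [e1, e2] at h3
  rw [e3] at h4
  nlinarith


/-- if the center-parameter condition fails at some `k` but holds at some
larger `k'`, then necessarily `n = 2`. -/
theorem late_center_parameter_forces_two_punctures
    (N n : ℕ) (hN : 2 ≤ N) (hn : 2 ≤ n)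
    (p χ : Fin n → ℕ → ℕ)
    (h : ∀ i, IsVanishingOrderSeq N (p i) (χ i) ∧ 2 ≤ p i 1)
    (hex : ∃ k k', 2 ≤ k ∧ k < k' ∧ k' ≤ N ∧
      (n - 1) * k < (∑ i, χ i k) ∧ (∑ i, χ i k') ≤ (n - 1) * k') :
    n = 2 := by
  by_contra hne
  have hn3 : 3 ≤ n := by omega
  obtain ⟨k, k', hk2, hkk', hk'N, hlt, hle⟩ := hex
  have hpart : ∀ i : Fin n, IsPartitionOf N (p i) := fun i => (h i).1.1
  have hchi : ∀ i : Fin n, ∀ m, 1 ≤ m → m ≤ N → χ i m = chiOf (p i) m := fun i => (h i).1.2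
  have h2' : ∀ i : Fin n, 2 ≤ p i 1 := fun i => (h i).2
  classical
  have key : ∀ m, k ≤ m → m ≤ k' → (n-1)*m + 1 ≤ ∑ i, χ i m := by
    intro m hm
    induction m, hm using Nat.le_induction with
    | base => intro _; exact hlt
    | succ m hm ih =>
      intro hm1
      have IH := ih (by omega)
      have hmN : m + 1 ≤ N := by omega
      have hm2 : 2 ≤ m := by omega
      set T : Finset (Fin n) := Finset.univ.filter (fun i => χ i (m+1) = χ i m) with hT
      by_cases hcard : 2 ≤ T.card
      · exfalso
        obtain ⟨i₀, hi₀, i₁, hi₁, hne01⟩ := Finset.one_lt_card.mp (show 1 < T.card by omega)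
        have hst : ∀ i ∈ T, 2 * χ i m ≤ m + 1 := by
          intro i hi
          rw [hT, Finset.mem_filter] at hi
          have hs := chi_stall (hpart i) hm2 hmN (by
            rw [← hchi i (m+1) (by omega) hmN, ← hchi i m (by omega) (by omega)]
            exact hi.2)
          rw [hchi i m (by omega) (by omega)]
          exact hs
        have hbound : ∀ i : Fin n, χ i m ≤ m - 1 := fun i => by
          rw [hchi i m (by omega) (by omega)]
          exact chi_le_pred (hpart i) (h2' i) hm2 (by omega)
        have hi₁' : i₁ ∈ Finset.univ.erase i₀ :=
          Finset.mem_erase.mpr ⟨hne01.symm, Finset.mem_univ i₁⟩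
        have e2 : χ i₁ m + ∑ i ∈ (Finset.univ.erase i₀).erase i₁, χ i m
            = ∑ i ∈ Finset.univ.erase i₀, χ i m :=
          Finset.add_sum_erase _ (fun i => χ i m) hi₁'
        have e1 : χ i₀ m + ∑ i ∈ Finset.univ.erase i₀, χ i m = ∑ i, χ i m :=
          Finset.add_sum_erase _ (fun i => χ i m) (Finset.mem_univ i₀)
        have hsum : ∑ i, χ i m
            = χ i₀ m + (χ i₁ m + ∑ i ∈ (Finset.univ.erase i₀).erase i₁, χ i m) := by
          rw [e2, e1]
        have hcard2 : ((Finset.univ.erase i₀).erase i₁).card = n - 2 := by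
          rw [Finset.card_erase_of_mem hi₁', Finset.card_erase_of_mem (Finset.mem_univ i₀)]
          simp
          omega
        have hrest : ∑ i ∈ (Finset.univ.erase i₀).erase i₁, χ i m ≤ (n - 2) * (m - 1) := by
          calc ∑ i ∈ (Finset.univ.erase i₀).erase i₁, χ i m
              ≤ ((Finset.univ.erase i₀).erase i₁).card • (m - 1) :=
                Finset.sum_le_card_nsmul _ _ _ (fun i _ => hbound i)
            _ = (n - 2) * (m - 1) := by rw [smul_eq_mul, hcard2]
        exact arith_contra hn3 hm2 (hst i₀ hi₀) (hst i₁ hi₁) hrest (hsum ▸ IH)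
      · -- at most one stall: sum increases by at least n - 1
        have hmono : ∀ i : Fin n, χ i m ≤ χ i (m+1) := fun i => by
          rw [hchi i m (by omega) (by omega), hchi i (m+1) (by omega) hmN]
          exact chi_mono (hpart i) (by omega) (by omega) hmN
        have hpt : ∀ i : Fin n, χ i m + (if i ∈ T then 0 else 1) ≤ χ i (m+1) := by
          intro i
          by_cases hiT : i ∈ T
          · rw [if_pos hiT]
            have := hmono i; omega
          · rw [if_neg hiT]
            have h1 := hmono i
            have h2 : χ i (m+1) ≠ χ i m := by
              intro hc
              exact hiT (by rw [hT, Finset.mem_filter]; exact ⟨Finset.mem_univ i, hc⟩)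
            omega
        have hsum2 : (∑ i, χ i m) + (n - T.card) ≤ ∑ i, χ i (m+1) := by
          have hA : ∑ i : Fin n, (if i ∈ T then (1:ℕ) else 0) = T.card := by
            simp [Finset.sum_ite_mem]
          have hB : (∑ i : Fin n, (if i ∈ T then (0:ℕ) else 1)) = n - T.card := by
            have hone : ∀ i : Fin n, (if i ∈ T then (1:ℕ) else 0) + (if i ∈ T then (0:ℕ) else 1) = 1 := by
              intro i; by_cases hi : i ∈ T <;> simp [hi]
            have hAB : ∑ i : Fin n, ((if i ∈ T then (1:ℕ) else 0) + (if i ∈ T then (0:ℕ) else 1)) = n := by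
              rw [Finset.sum_congr rfl (fun i _ => hone i), Finset.sum_const, smul_eq_mul,
                Finset.card_univ, Fintype.card_fin, mul_one]
            rw [Finset.sum_add_distrib, hA] at hAB
            have : T.card ≤ n := le_trans (Finset.card_le_card (Finset.subset_univ T)) (by simp)
            omega
          calc (∑ i, χ i m) + (n - T.card)
              = ∑ i : Fin n, (χ i m + (if i ∈ T then 0 else 1)) := by
                rw [Finset.sum_add_distrib, hB]
            _ ≤ ∑ i, χ i (m+1) := Finset.sum_le_sum (fun i _ => hpt i)
        have hexp : (n-1)*(m+1) = (n-1)*m + (n-1) := by ring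
        rw [hexp]
        have hTc : T.card ≤ 1 := by omega
        generalize hP : (n-1)*m = P at IH ⊢
        omega
  have hfin := key k' hkk'.le le_rfl
  generalize hQ : (n-1)*k' = Q at hfin hle
  omega
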